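/- Let N ≥ 1 be an integer and 0 < α < 1, 0 < β < 1. Define D₁ = 1 + αβ/(1−α) and η = β/((1−α)D₁). Then φ₀(i) = b(i;N;η) is a stationary distribution of the kernel K, i.e. Σ_{j=0}^N K(i,j)·φ₀(j) = φ₀(i) for all 0 ≤ i ≤ N. -/

import Mathlib

/-- The binomial distribution `b(k;n;p) = C(n,k) p^k (1-p)^(n-k)`
(automatically `0` when `k > n` since `C(n,k) = 0`). -/
noncomputable def binom (n k : ℕ) (p : ℝ) : ℝ :=
  (n.choose k : ℝ) * p ^ k * (1 - p) ^ (n - k)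

/-- One-variable cumulative Bernoulli trial transition kernel on `{0,…,N}`:
`K(j,i) = ∑_{k=0}^{min(i,j)} b(k;i;α) b(j-k;N-k;β)`, the probability of moving
from state `i` to state `j`. -/
noncomputable def K1 (N : ℕ) (α β : ℝ) (j i : ℕ) : ℝ :=
  ∑ k ∈ Finset.range (min i j + 1), binom i k α * binom (N - k) (j - k) β

/-- Inner sum: `∑_j b(k;j;α) b(j;N;η) = C(N,k) (αη)^k ((1-α)η + (1-η))^(N-k)`. -/
lemma sum_binom_binom (N k : ℕ) (hk : k ≤ N) (α η : ℝ) :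
    ∑ j ∈ Finset.range (N + 1), binom j k α * binom N j η
      = (N.choose k : ℝ) * (α * η) ^ k * ((1 - α) * η + (1 - η)) ^ (N - k) := by
  rw [Finset.range_eq_Ico,
    ← Finset.sum_Ico_consecutive _ (Nat.zero_le k) (by omega : k ≤ N + 1)]
  have h1 : ∑ j ∈ Finset.Ico 0 k, binom j k α * binom N j η = 0 := by
    apply Finset.sum_eq_zero; intro j hj
    rw [Finset.mem_Ico] at hj
    simp [binom, Nat.choose_eq_zero_of_lt hj.2]
  rw [h1, zero_add, Finset.sum_Ico_eq_sum_range]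
  have hN1 : N + 1 - k = (N - k) + 1 := by omega
  rw [hN1, add_pow, Finset.mul_sum]
  apply Finset.sum_congr rfl
  intro m hm
  rw [Finset.mem_range] at hm
  have hkm : k + m ≤ N := by omega
  have hcc : (N.choose (k + m) : ℝ) * ((k + m).choose k : ℝ)
      = (N.choose k : ℝ) * ((N - k).choose m : ℝ) := by
    have h := Nat.choose_mul (n := N) (Nat.le_add_right k m)
    have h2 : k + m - k = m := by omega
    rw [h2] at h
    exact_mod_cast congrArg (Nat.cast (R := ℝ)) h
  simp only [binom]
  have e1 : k + m - k = m := by omega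
  have e2 : N - (k + m) = N - k - m := by omega
  rw [e1, e2]
  have e3 : η ^ (k + m) = η ^ k * η ^ m := pow_add η k m
  rw [e3, mul_pow, mul_pow]
  linear_combination (α ^ k * (1 - α) ^ m * η ^ k * η ^ m * (1 - η) ^ (N - k - m)) * hcc

theorem stmt_1 (N : ℕ) (hN : 1 ≤ N) (α β : ℝ)
    (hα0 : 0 < α) (hα1 : α < 1) (hβ0 : 0 < β) (hβ1 : β < 1)
    (D₁ : ℝ) (hD : D₁ = 1 + α * β / (1 - α))
    (η : ℝ) (hη : η = β / ((1 - α) * D₁)) :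
    ∀ i : ℕ, i ≤ N →
      ∑ j ∈ Finset.range (N + 1), K1 N α β i j * binom N j η = binom N i η := by
  have hα' : (0:ℝ) < 1 - α := by linarith
  have hden : (1 - α) * D₁ = 1 - α + α * β := by
    rw [hD]; field_simp
  have hdenpos : (0:ℝ) < 1 - α + α * β := by nlinarith
  have hden0 : (1 - α) * D₁ ≠ 0 := by rw [hden]; linarith
  have hηval : η * (1 - α + α * β) = β := by
    rw [hη, hden]; field_simp
  -- two key scalar identities
  have key1 : α * η + β * (1 - α * η) = η := by nlinarith [hηval]
  have key2 : (1 - β) * (1 - α * η) = 1 - η := by nlinarith [hηval]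
  intro i hi
  -- Step 1: extend inner range and swap sums
  have step1 : ∑ j ∈ Finset.range (N + 1), K1 N α β i j * binom N j η
      = ∑ k ∈ Finset.range (i + 1), binom (N - k) (i - k) β *
          ∑ j ∈ Finset.range (N + 1), binom j k α * binom N j η := by
    simp only [K1, Finset.sum_mul]
    have hext : ∀ j ∈ Finset.range (N + 1),
        ∑ k ∈ Finset.range (min j i + 1), binom j k α * binom (N - k) (i - k) β * binom N j η
        = ∑ k ∈ Finset.range (i + 1), binom j k α * binom (N - k) (i - k) β * binom N j η := by
      intro j _
      apply Finset.sum_subset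
      · intro k hk
        simp only [Finset.mem_range] at *
        omega
      · intro k hk hk'
        simp only [Finset.mem_range] at hk hk'
        have hjk : j < k := by omega
        simp [binom, Nat.choose_eq_zero_of_lt hjk]
    rw [Finset.sum_congr rfl hext, Finset.sum_comm]
    apply Finset.sum_congr rfl
    intro k _
    rw [Finset.mul_sum]
    apply Finset.sum_congr rfl
    intro j _
    ring
  rw [step1]
  -- Step 2: evaluate inner sums
  have step2 : ∀ k ∈ Finset.range (i + 1),
      binom (N - k) (i - k) β * ∑ j ∈ Finset.range (N + 1), binom j k α * binom N j η
      = binom (N - k) (i - k) β * ((N.choose k : ℝ) * (α * η) ^ k * (1 - α * η) ^ (N - k)) := by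
    intro k hk
    rw [Finset.mem_range, Nat.lt_succ_iff] at hk
    rw [sum_binom_binom N k (le_trans hk hi) α η]
    have : (1 - α) * η + (1 - η) = 1 - α * η := by ring
    rw [this]
  rw [Finset.sum_congr rfl step2]
  -- Step 3: final binomial collapse
  have rhs : binom N i η
      = (N.choose i : ℝ) * (α * η + β * (1 - α * η)) ^ i * ((1 - β) * (1 - α * η)) ^ (N - i) := by
    rw [key1, key2]; rfl
  rw [rhs, add_pow, Finset.mul_sum, Finset.sum_mul]
  apply Finset.sum_congr rfl
  intro k hk
  rw [Finset.mem_range, Nat.lt_succ_iff] at hk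
  have hcc : (N.choose i : ℝ) * (i.choose k : ℝ)
      = (N.choose k : ℝ) * ((N - k).choose (i - k) : ℝ) := by
    exact_mod_cast congrArg (Nat.cast (R := ℝ)) (Nat.choose_mul (n := N) hk)
  simp only [binom]
  have e1 : N - k - (i - k) = N - i := by omega
  have e2 : N - k = (i - k) + (N - i) := by omega
  have e3 : (1 - α * η) ^ (N - k) = (1 - α * η) ^ (i - k) * (1 - α * η) ^ (N - i) := by
    rw [e2, pow_add]
  rw [e1, e3, mul_pow, mul_pow, mul_pow]
  linear_combination (-(β ^ (i - k) * (1 - β) ^ (N - i) * (α * η) ^ k *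
    (1 - α * η) ^ (i - k) * (1 - α * η) ^ (N - i))) * hcc
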